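/- Let T_n (for n ≥ 1) be the group of permutations σ of the positive integers with σ(k) = k for all k > n. Then: (i) for all n_1, …, n_k ≥ 1 the setwise product T_{n_1}·T_{n_2}⋯T_{n_k} equals T_{max(n_1,…,n_k)}; consequently, for every permutation m of {1,…,k} and every x ∈ 𝔅, x T_{n_1}⋯T_{n_k} = x T_{n_{m_1}}⋯T_{n_{m_k}}, i.e. (𝔅,(T_n : n ≥ 1)) is a pseudo-multi-transformation group; and (ii) there exist σ ∈ T_2 and μ ∈ T_3 (namely the transpositions (1 2) and (1 3)) with 1·f_σ·f_μ ≠ 1·f_μ·f_σ, so (𝔅,(T_n : n ≥ 1)) is not a multi-transformation group. -/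

import Mathlib

open Pointwise Classical

/-- 𝔅 = {0} ∪ {1/n : n a positive integer} as a subspace of ℝ. -/
def Bset : Set ℝ := {x | x = 0 ∨ ∃ n : ℕ+, x = 1 / ((n : ℕ) : ℝ)}

/-- The homeomorphism `f_σ` of `𝔅` induced by a permutation `σ` of the positive
integers: `(1/k) f_σ = 1/σ(k)` and `0 f_σ = 0`. -/
noncomputable def fPerm (σ : Equiv.Perm ℕ+) (x : Bset) : Bset :=
  if h : ∃ n : ℕ+, (x : ℝ) = 1 / ((n : ℕ) : ℝ) then
    ⟨1 / (((σ h.choose : ℕ+) : ℕ) : ℝ), Or.inr ⟨σ h.choose, rfl⟩⟩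
  else ⟨0, Or.inl rfl⟩

/-- The pair `(x, y)` is proximal for the set `S` of self-maps of `X`. -/
def IsProximal {X : Type*} [TopologicalSpace X] (S : Set (X → X)) (x y : X) : Prop :=
  ∃ z : X, (z, z) ∈ closure {p : X × X | ∃ f ∈ S, p = (f x, f y)}

/-- The action of the set `S` of self-maps of `X` is distal. -/
def IsDistalAction {X : Type*} [TopologicalSpace X] (S : Set (X → X)) : Prop :=
  ∀ x y : X, IsProximal S x y → x = y

/-- The set of self-maps of `𝔅` induced by a set of permutations. -/
noncomputable def permAct (S : Set (Equiv.Perm ℕ+)) : Set (Bset → Bset) :=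
  {f | ∃ σ ∈ S, f = fPerm σ}

/-- The orbit `xS` of a point of `𝔅`. -/
def pointOrbit (x : Bset) (S : Set (Equiv.Perm ℕ+)) : Set Bset :=
  {y | ∃ σ ∈ S, y = fPerm σ x}

/-- `P S = {x σ : x ∈ P, σ ∈ S}`, the action of a set of permutations on a set of points. -/
def actSet (P : Set Bset) (S : Set (Equiv.Perm ℕ+)) : Set Bset :=
  {y | ∃ x ∈ P, ∃ σ ∈ S, y = fPerm σ x}

/-- `T_n`: permutations fixing every `k > n`. -/
def TnSet (n : ℕ+) : Set (Equiv.Perm ℕ+) := {σ | ∀ k : ℕ+, n < k → σ k = k}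

/-- `T`: the finitary permutations of the positive integers. -/
def Tfin : Set (Equiv.Perm ℕ+) := {σ | ∃ n : ℕ+, ∀ k : ℕ+, n < k → σ k = k}

noncomputable def onePt : Bset := ⟨1, Or.inr ⟨1, by norm_num⟩⟩
def zeroPt : Bset := ⟨0, Or.inl rfl⟩

lemma inv_inj' {n m : ℕ+} (h : (1:ℝ) / ((n:ℕ):ℝ) = 1 / ((m:ℕ):ℝ)) : n = m := by
  have hn : ((n:ℕ):ℝ) ≠ 0 := by exact_mod_cast n.ne_zero
  have hm : ((m:ℕ):ℝ) ≠ 0 := by exact_mod_cast m.ne_zero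
  have : ((n:ℕ):ℝ) = ((m:ℕ):ℝ) := by
    field_simp at h; exact_mod_cast h.symm
  exact_mod_cast this

lemma fPerm_apply (σ : Equiv.Perm ℕ+) (n : ℕ+) (x : Bset)
    (hx : (x : ℝ) = 1 / ((n:ℕ):ℝ)) :
    fPerm σ x = ⟨1 / (((σ n : ℕ+) : ℕ) : ℝ), Or.inr ⟨σ n, rfl⟩⟩ := by
  have h : ∃ m : ℕ+, (x : ℝ) = 1 / ((m : ℕ) : ℝ) := ⟨n, hx⟩
  have hc : h.choose = n := (inv_inj' (hx.symm.trans h.choose_spec)).symm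
  simp only [fPerm, dif_pos h]
  exact Subtype.ext (by simp only [hc])

lemma fPerm_zero (σ : Equiv.Perm ℕ+) (x : Bset) (hx : (x : ℝ) = 0) :
    fPerm σ x = ⟨0, Or.inl rfl⟩ := by
  have h : ¬ ∃ m : ℕ+, (x : ℝ) = 1 / ((m : ℕ) : ℝ) := by
    rintro ⟨m, hm⟩
    have : ((m:ℕ):ℝ) ≠ 0 := by exact_mod_cast m.ne_zero
    rw [hx] at hm
    exact this (by field_simp at hm; simp at hm)
  simp only [fPerm, dif_neg h]

lemma fPerm_mul (σ τ : Equiv.Perm ℕ+) (x : Bset) :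
    fPerm (σ * τ) x = fPerm σ (fPerm τ x) := by
  rcases x.2 with h | ⟨n, h⟩
  · rw [fPerm_zero _ _ h, fPerm_zero _ _ h, fPerm_zero _ _ rfl]
  · rw [fPerm_apply τ n x h, fPerm_apply (σ * τ) n x h, fPerm_apply σ (τ n) _ rfl]
    exact Subtype.ext (by simp [Equiv.Perm.mul_apply])

lemma one_mem_TnSet (n : ℕ+) : (1 : Equiv.Perm ℕ+) ∈ TnSet n := fun k _ => rfl

lemma TnSet_mono {a b : ℕ+} (h : a ≤ b) : TnSet a ⊆ TnSet b :=
  fun σ hσ k hk => hσ k (lt_of_le_of_lt h hk)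

lemma TnSet_mul (a b : ℕ+) : TnSet a * TnSet b = TnSet (max a b) := by
  ext σ
  constructor
  · rintro ⟨α, hα, β, hβ, rfl⟩
    intro k hk
    have h1 : β k = k := hβ k (lt_of_le_of_lt (le_max_right a b) hk)
    have h2 : α k = k := hα k (lt_of_le_of_lt (le_max_left a b) hk)
    simp [Equiv.Perm.mul_apply, h1, h2]
  · intro h
    rcases le_total a b with hab | hab
    · rw [max_eq_right hab] at h
      exact ⟨1, one_mem_TnSet a, σ, h, one_mul σ⟩
    · rw [max_eq_left hab] at h
      exact ⟨σ, h, 1, one_mem_TnSet b, mul_one σ⟩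

lemma TnSet_prod (l : List ℕ+) (hl : l ≠ []) :
    (l.map TnSet).prod = TnSet (l.foldr max 1) := by
  induction l with
  | nil => exact absurd rfl hl
  | cons a t ih =>
    cases t with
    | nil => simp [List.foldr, max_eq_left a.one_le]
    | cons b t' =>
      rw [List.map_cons, List.prod_cons, ih (by simp), List.foldr_cons, TnSet_mul]
      rfl

lemma actSet_actSet (P : Set Bset) (S S' : Set (Equiv.Perm ℕ+)) :
    actSet (actSet P S) S' = {y | ∃ x ∈ P, ∃ σ ∈ S' * S, y = fPerm σ x} := by
  ext y
  constructor
  · rintro ⟨z, ⟨x, hx, σ, hσ, rfl⟩, τ, hτ, rfl⟩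
    exact ⟨x, hx, τ * σ, Set.mul_mem_mul hτ hσ, (fPerm_mul τ σ x).symm⟩
  · rintro ⟨x, hx, _, ⟨τ, hτ, σ, hσ, rfl⟩, rfl⟩
    exact ⟨fPerm σ x, ⟨x, hx, σ, hσ, rfl⟩, τ, hτ, fPerm_mul τ σ x⟩

lemma actSet_TnSet_TnSet (P : Set Bset) (a b : ℕ+) :
    actSet (actSet P (TnSet a)) (TnSet b) = actSet P (TnSet (max a b)) := by
  rw [actSet_actSet, TnSet_mul, max_comm]; rfl

lemma foldl_actSet (l : List ℕ+) (hl : l ≠ []) (P : Set Bset) :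
    (l.map TnSet).foldl actSet P = actSet P (TnSet (l.foldr max 1)) := by
  induction l generalizing P with
  | nil => exact absurd rfl hl
  | cons a t ih =>
    cases t with
    | nil => simp [List.foldl, List.foldr, max_eq_left a.one_le]
    | cons b t' =>
      rw [List.map_cons, List.foldl_cons, ih (by simp), List.foldr_cons,
        actSet_TnSet_TnSet]
      congr 1

lemma foldr_max_perm {l l' : List ℕ+} (h : l.Perm l') :
    l.foldr max 1 = l'.foldr max 1 := by
  induction h with
  | nil => rfl
  | cons a _ ih => simp only [List.foldr_cons, ih]
  | swap a b l => simp only [List.foldr_cons]; rw [max_left_comm]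
  | trans _ _ ih1 ih2 => exact ih1.trans ih2

lemma part2 (l l' : List ℕ+) (h : l.Perm l') (x : Bset) :
    (l.map TnSet).foldl actSet {x} = (l'.map TnSet).foldl actSet {x} := by
  rcases eq_or_ne l [] with rfl | hl
  · rw [h.nil_eq.symm]
  · have hl' : l' ≠ [] := fun hn => hl (List.Perm.eq_nil (hn ▸ h))
    rw [foldl_actSet l hl, foldl_actSet l' hl', foldr_max_perm h]

lemma swap12_mem : Equiv.swap (1:ℕ+) 2 ∈ TnSet 2 := by
  intro k hk
  apply Equiv.swap_apply_of_ne_of_ne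
  · exact fun hh => by simp [hh] at hk
  · exact fun hh => by simp [hh] at hk

lemma swap13_mem : Equiv.swap (1:ℕ+) 3 ∈ TnSet 3 := by
  intro k hk
  apply Equiv.swap_apply_of_ne_of_ne
  · exact fun hh => by simp [hh] at hk
  · exact fun hh => by simp [hh] at hk

lemma part3 : fPerm (Equiv.swap (1:ℕ+) 3) (fPerm (Equiv.swap (1:ℕ+) 2) onePt)
    ≠ fPerm (Equiv.swap (1:ℕ+) 2) (fPerm (Equiv.swap (1:ℕ+) 3) onePt) := by
  have h1 : (onePt : ℝ) = 1 / (((1:ℕ+):ℕ):ℝ) := by norm_num [onePt]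
  rw [fPerm_apply _ 1 _ h1, fPerm_apply _ 1 _ h1,
    Equiv.swap_apply_left, Equiv.swap_apply_left,
    fPerm_apply _ 2 _ rfl, fPerm_apply _ 3 _ rfl]
  have h2 : Equiv.swap (1:ℕ+) 3 2 = 2 := Equiv.swap_apply_of_ne_of_ne (by decide) (by decide)
  have h3 : Equiv.swap (1:ℕ+) 2 3 = 3 := Equiv.swap_apply_of_ne_of_ne (by decide) (by decide)
  rw [h2, h3]
  intro hcon
  have := congrArg Subtype.val hcon
  norm_num at this

/-- `(𝔅,(T_n : n ≥ 1))` is a pseudo-multi-transformation group but not a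
multi-transformation group: (i) `T_{n₁} ⋯ T_{n_k} = T_{max(n₁,…,n_k)}`, hence the orbit sets
`x T_{n₁} ⋯ T_{n_k}` are invariant under permuting the indices; (ii) there are `σ ∈ T_2`,
`μ ∈ T_3` (the transpositions `(1 2)` and `(1 3)`) with `1 f_σ f_μ ≠ 1 f_μ f_σ`. -/
theorem stmt0 :
    (∀ l : List ℕ+, l ≠ [] → (l.map TnSet).prod = TnSet (l.foldr max 1)) ∧
    (∀ l l' : List ℕ+, l.Perm l' → ∀ x : Bset,
      (l.map TnSet).foldl actSet {x} = (l'.map TnSet).foldl actSet {x}) ∧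
    (∃ σ ∈ TnSet 2, ∃ μ ∈ TnSet 3,
      σ = Equiv.swap 1 2 ∧ μ = Equiv.swap 1 3 ∧
      fPerm μ (fPerm σ onePt) ≠ fPerm σ (fPerm μ onePt)) := by
  refine ⟨fun l hl => TnSet_prod l hl,
    fun l l' h x => part2 l l' h x,
    Equiv.swap 1 2, swap12_mem, Equiv.swap 1 3, swap13_mem, rfl, rfl, part3⟩
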